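/- arXiv:1607.07606 — 2 statements merged into one kernel-verified Lean document; each statement's English description precedes it below -/
import Mathlib

section
/- Assume φ : (0,∞) → (0,∞) satisfies the global scaling condition: there exist a₁, a₂ > 0 and 1/2 < δ₁ ≤ δ₂ < 1 with a₁ λ^{δ₁} ≤ φ(λr)/φ(r) ≤ a₂ λ^{δ₂} for all λ ≥ 1, r > 0. Then there exists a constant c > 1 such that for all x > 0, c⁻¹ · 1/(x·φ(1/x²)) ≤ (1/π) ∫₀^∞ (1 - cos(λx))/φ(λ²) dλ ≤ c · 1/(x·φ(1/x²)). -/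
open MeasureTheory Set

set_option maxHeartbeats 1600000 in
theorem h_two_sided_estimate
    (φ : ℝ → ℝ) (hφ_meas : Measurable φ) (hφ_pos : ∀ x > (0:ℝ), 0 < φ x)
    (a₁ a₂ δ₁ δ₂ : ℝ) (ha₁ : 0 < a₁) (ha₂ : 0 < a₂)
    (hδ₁ : 1 / 2 < δ₁) (hδ₁₂ : δ₁ ≤ δ₂) (hδ₂ : δ₂ < 1)
    (hH : ∀ lam ≥ (1:ℝ), ∀ r > (0:ℝ),
      a₁ * lam ^ δ₁ * φ r ≤ φ (lam * r) ∧ φ (lam * r) ≤ a₂ * lam ^ δ₂ * φ r) :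
    ∃ c > (1:ℝ), ∀ x > (0:ℝ),
      c⁻¹ * (1 / (x * φ (1 / x ^ 2)))
        ≤ (1 / Real.pi) * ∫ l in Ioi (0:ℝ), (1 - Real.cos (l * x)) / φ (l ^ 2) ∧
      (1 / Real.pi) * (∫ l in Ioi (0:ℝ), (1 - Real.cos (l * x)) / φ (l ^ 2))
        ≤ c * (1 / (x * φ (1 / x ^ 2))) := by
  have hπ := Real.pi_pos
  have hcos1 : (1:ℝ)/3 ≤ 1 - Real.cos 1 := by have := Real.cos_one_le; linarith
  have hδ1' : (0:ℝ) < 2*δ₁ - 1 := by linarith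
  have hC₁pos : 0 < a₂/2 + 2/(a₁*(2*δ₁-1)) := by
    have h1 : (0:ℝ) < a₂/2 := by positivity
    have h2 : (0:ℝ) < 2/(a₁*(2*δ₁-1)) := by positivity
    linarith
  have hterm1 : (0:ℝ) < 4*a₂*Real.pi/(1 - Real.cos 1) := by positivity
  have hterm2 : (0:ℝ) < (a₂/2 + 2/(a₁*(2*δ₁-1)))/Real.pi := by positivity
  refine ⟨4*a₂*Real.pi/(1 - Real.cos 1) + (a₂/2 + 2/(a₁*(2*δ₁-1)))/Real.pi + 2,
    by linarith, ?_⟩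
  set c : ℝ := 4*a₂*Real.pi/(1 - Real.cos 1) + (a₂/2 + 2/(a₁*(2*δ₁-1)))/Real.pi + 2 with hcdef
  intro x hx
  have hx0 : x ≠ 0 := ne_of_gt hx
  have hrpos : (0:ℝ) < 1/x^2 := by positivity
  have hφr : 0 < φ (1/x^2) := hφ_pos _ hrpos
  set g : ℝ → ℝ := fun l => (1 - Real.cos (l * x)) / φ (l ^ 2) with hgdef
  have hgmeas : Measurable g :=
    (measurable_const.sub (Real.measurable_cos.comp (measurable_id.mul_const x))).div
      (hφ_meas.comp (measurable_id.pow_const 2))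
  have hgnn : ∀ l : ℝ, 0 < l → 0 ≤ g l := fun l hl =>
    div_nonneg (by linarith [Real.cos_le_one (l*x)]) (hφ_pos _ (by positivity)).le
  -- scaling bounds
  have key1 : ∀ l : ℝ, 0 < l → 1 ≤ l*x →
      a₁ * ((l*x)^2) ^ δ₁ * φ (1/x^2) ≤ φ (l^2) ∧
      φ (l^2) ≤ a₂ * ((l*x)^2) ^ δ₂ * φ (1/x^2) := by
    intro l hl hlx
    have h1 : (1:ℝ) ≤ (l*x)^2 := by nlinarith
    have harg : (l*x)^2 * (1/x^2) = l^2 := by field_simp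
    have := hH ((l*x)^2) h1 (1/x^2) hrpos
    rwa [harg] at this
  have key2 : ∀ l : ℝ, 0 < l → l*x ≤ 1 →
      a₁ * (((l*x)^2)⁻¹) ^ δ₁ * φ (l^2) ≤ φ (1/x^2) ∧
      φ (1/x^2) ≤ a₂ * (((l*x)^2)⁻¹) ^ δ₂ * φ (l^2) := by
    intro l hl hlx
    have hlx0 : 0 < l*x := mul_pos hl hx
    have hs0 : (0:ℝ) < (l*x)^2 := by positivity
    have h1 : (1:ℝ) ≤ ((l*x)^2)⁻¹ := (one_le_inv₀ hs0).2 (by nlinarith)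
    have hl2 : (0:ℝ) < l^2 := by positivity
    have harg : ((l*x)^2)⁻¹ * l^2 = 1/x^2 := by field_simp
    have := hH _ h1 (l^2) hl2
    rwa [harg] at this
  -- pointwise upper bound near zero
  have bound1 : ∀ l ∈ Ioc (0:ℝ) (1/x), g l ≤ a₂ / (2 * φ (1/x^2)) := by
    intro l hl
    obtain ⟨hl0, hlu⟩ := hl
    have hlx1 : l*x ≤ 1 := by
      have := (le_div_iff₀ hx).1 hlu; linarith
    have hlx0 : 0 < l*x := mul_pos hl0 hx
    have hs0 : (0:ℝ) < (l*x)^2 := by positivity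
    have hφl : 0 < φ (l^2) := hφ_pos _ (by positivity)
    have hk := (key2 l hl0 hlx1).2
    rw [Real.inv_rpow hs0.le] at hk
    have hnum : 1 - Real.cos (l*x) ≤ (l*x)^2 / 2 := by
      have := Real.one_sub_sq_div_two_le_cos (x := l*x); linarith
    have hpow : (l*x)^2 * (((l*x)^2) ^ δ₂)⁻¹ ≤ 1 := by
      have h : (l*x)^2 * (((l*x)^2) ^ δ₂)⁻¹ = ((l*x)^2) ^ ((1:ℝ) - δ₂) := by
        rw [Real.rpow_sub hs0, Real.rpow_one]; ring
      rw [h]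
      exact Real.rpow_le_one hs0.le (by nlinarith) (by linarith)
    show (1 - Real.cos (l * x)) / φ (l ^ 2) ≤ a₂ / (2 * φ (1/x^2))
    rw [div_le_div_iff₀ hφl (by positivity)]
    calc (1 - Real.cos (l*x)) * (2 * φ (1/x^2))
        ≤ ((l*x)^2/2) * (2 * φ (1/x^2)) :=
          mul_le_mul_of_nonneg_right hnum (by positivity)
      _ = (l*x)^2 * φ (1/x^2) := by ring
      _ ≤ (l*x)^2 * (a₂ * (((l*x)^2) ^ δ₂)⁻¹ * φ (l^2)) :=
          mul_le_mul_of_nonneg_left hk hs0.le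
      _ = ((l*x)^2 * (((l*x)^2) ^ δ₂)⁻¹) * (a₂ * φ (l^2)) := by ring
      _ ≤ 1 * (a₂ * φ (l^2)) :=
          mul_le_mul_of_nonneg_right hpow (by positivity)
      _ = a₂ * φ (l^2) := one_mul _
  -- pointwise upper bound on the tail
  have bound2 : ∀ l ∈ Ioi (1/x), g l ≤ (2/(a₁ * φ (1/x^2)) * x ^ (-(2*δ₁))) * l ^ (-(2*δ₁)) := by
    intro l hl
    have hl1x : 1/x < l := hl
    have hl0 : 0 < l := lt_trans (by positivity) hl1x
    have hlx1 : 1 ≤ l*x := by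
      have := (div_lt_iff₀ hx).1 hl1x; linarith
    have hs0 : (0:ℝ) < (l*x)^2 := by positivity
    have hφl : 0 < φ (l^2) := hφ_pos _ (by positivity)
    have hk := (key1 l hl0 hlx1).1
    have hu0 : (0:ℝ) < ((l*x)^2) ^ δ₁ := Real.rpow_pos_of_pos hs0 _
    have hB : (0:ℝ) < a₁ * ((l*x)^2) ^ δ₁ * φ (1/x^2) := by positivity
    have h2 : g l ≤ 2 / (a₁ * ((l*x)^2) ^ δ₁ * φ (1/x^2)) := by
      refine div_le_div₀ (by norm_num) ?_ hB hk
      have := Real.neg_one_le_cos (l*x); linarith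
    refine h2.trans_eq ?_
    have hpow : ((l*x)^2) ^ δ₁ = (x ^ (2*δ₁) * l ^ (2*δ₁)) := by
      rw [← Real.rpow_natCast (l*x) 2, ← Real.rpow_mul (by positivity : (0:ℝ) ≤ l*x),
        Real.mul_rpow hl0.le hx.le]
      push_cast
      ring_nf
    rw [hpow, Real.rpow_neg hx.le, Real.rpow_neg hl0.le]
    have hxp : (0:ℝ) < x ^ (2*δ₁) := Real.rpow_pos_of_pos hx _
    have hlp : (0:ℝ) < l ^ (2*δ₁) := Real.rpow_pos_of_pos hl0 _
    field_simp
  -- integrability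
  have h1x : (0:ℝ) < 1/x := by positivity
  have hIoc_fin : volume (Ioc (0:ℝ) (1/x)) < ⊤ := by
    rw [Real.volume_Ioc]; exact ENNReal.ofReal_lt_top
  have hInt1 : IntegrableOn g (Ioc 0 (1/x)) := by
    refine Integrable.mono' (g := fun _ => a₂ / (2 * φ (1/x^2)))
      (integrableOn_const hIoc_fin.ne) hgmeas.aestronglyMeasurable ?_
    rw [ae_restrict_iff' measurableSet_Ioc]
    filter_upwards with l hl
    rw [Real.norm_eq_abs, abs_of_nonneg (hgnn l hl.1)]
    exact bound1 l hl
  have hInt2 : IntegrableOn g (Ioi (1/x)) := by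
    refine Integrable.mono'
      (g := fun l => (2/(a₁ * φ (1/x^2)) * x ^ (-(2*δ₁))) * l ^ (-(2*δ₁)))
      ((integrableOn_Ioi_rpow_of_lt (by linarith) h1x).const_mul _)
      hgmeas.aestronglyMeasurable ?_
    rw [ae_restrict_iff' measurableSet_Ioi]
    filter_upwards with l hl
    rw [Real.norm_eq_abs, abs_of_nonneg (hgnn l (lt_trans h1x hl))]
    exact bound2 l hl
  have hIntAll : IntegrableOn g (Ioi 0) := by
    have := hInt1.union hInt2
    rwa [Ioc_union_Ioi_eq_Ioi h1x.le] at this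
  have hsplit : ∫ l in Ioi (0:ℝ), g l
      = (∫ l in Ioc (0:ℝ) (1/x), g l) + ∫ l in Ioi (1/x), g l := by
    rw [← setIntegral_union (Ioc_disjoint_Ioi le_rfl) measurableSet_Ioi hInt1 hInt2,
      Ioc_union_Ioi_eq_Ioi h1x.le]
  -- upper bound for the two pieces
  have hU1 : (∫ l in Ioc (0:ℝ) (1/x), g l) ≤ a₂ / (2 * φ (1/x^2)) * (1/x) := by
    have h := setIntegral_mono_on hInt1 (integrableOn_const hIoc_fin.ne)
      measurableSet_Ioc bound1
    rw [setIntegral_const, measureReal_def, Real.volume_Ioc, ENNReal.toReal_ofReal (by rw [sub_zero]; positivity),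
      smul_eq_mul] at h
    calc (∫ l in Ioc (0:ℝ) (1/x), g l) ≤ (1/x - 0) * (a₂ / (2 * φ (1/x^2))) := h
    _ = a₂ / (2 * φ (1/x^2)) * (1/x) := by ring
  have hU2 : (∫ l in Ioi (1/x), g l) ≤ 2/(a₁ * (2*δ₁-1) * φ (1/x^2)) * (1/x) := by
    have h := setIntegral_mono_on hInt2
      ((integrableOn_Ioi_rpow_of_lt (by linarith : -(2*δ₁) < -1) h1x).const_mul
        (2/(a₁ * φ (1/x^2)) * x ^ (-(2*δ₁)))) measurableSet_Ioi bound2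
    rw [MeasureTheory.integral_const_mul, integral_Ioi_rpow_of_lt (by linarith) h1x] at h
    refine h.trans_eq ?_
    have h1 : ((1:ℝ)/x) ^ (-(2*δ₁) + 1) = x ^ (2*δ₁ - 1) := by
      rw [one_div, ← Real.rpow_neg_one x, ← Real.rpow_mul hx.le,
        show (-1:ℝ)*(-(2*δ₁)+1) = 2*δ₁-1 by ring]
    have h2 : x ^ (-(2*δ₁)) * x ^ (2*δ₁-1) = 1/x := by
      rw [← Real.rpow_add hx, show -(2*δ₁) + (2*δ₁-1) = (-1:ℝ) by ring,
        Real.rpow_neg_one, one_div]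
    rw [h1, show -(x ^ (2*δ₁-1)) / (-(2*δ₁)+1) = x ^ (2*δ₁-1) / (2*δ₁-1) by
        rw [← neg_div_neg_eq]; ring_nf]
    rw [show (2:ℝ)/(a₁ * φ (1/x^2)) * x ^ (-(2*δ₁)) * (x ^ (2*δ₁-1) / (2*δ₁-1))
        = (x ^ (-(2*δ₁)) * x ^ (2*δ₁-1)) * (2/(a₁ * (2*δ₁-1) * φ (1/x^2))) by
        field_simp]
    rw [h2]; ring
  -- lower bound
  have hIntIoc : IntegrableOn g (Ioc (1/x) (2/x)) :=
    hInt2.mono_set Ioc_subset_Ioi_self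
  have hLB : (1 - Real.cos 1)/(4*a₂*φ (1/x^2)) * (1/x) ≤ ∫ l in Ioc (1/x) (2/x), g l := by
    have hpt : ∀ l ∈ Ioc (1/x) (2/x), (1 - Real.cos 1)/(4*a₂*φ (1/x^2)) ≤ g l := by
      intro l hl
      obtain ⟨hll, hlu⟩ := hl
      have hl0 : 0 < l := lt_trans h1x hll
      have hlx1 : 1 ≤ l*x := by
        have := (div_lt_iff₀ hx).1 hll; linarith
      have hlx2 : l*x ≤ 2 := by
        have := (le_div_iff₀ hx).1 hlu; linarith
      have hφl : 0 < φ (l^2) := hφ_pos _ (by positivity)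
      have hcoss : Real.cos (l*x) ≤ Real.cos 1 :=
        Real.cos_le_cos_of_nonneg_of_le_pi (by norm_num)
          (le_trans hlx2 Real.two_le_pi) hlx1
      have hs1 : (1:ℝ) ≤ (l*x)^2 := by nlinarith
      have hsle : ((l*x)^2 : ℝ) ^ δ₂ ≤ 4 := by
        calc ((l*x)^2 : ℝ) ^ δ₂ ≤ ((l*x)^2) ^ (1:ℝ) :=
              Real.rpow_le_rpow_of_exponent_le hs1 (by linarith)
          _ = (l*x)^2 := Real.rpow_one _
          _ ≤ 4 := by nlinarith
      have hφlu : φ (l^2) ≤ 4*a₂*φ (1/x^2) := by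
        have hk := (key1 l hl0 hlx1).2
        have h4 : a₂ * ((l*x)^2) ^ δ₂ * φ (1/x^2) ≤ a₂ * 4 * φ (1/x^2) := by
          have := mul_le_mul_of_nonneg_right
            (mul_le_mul_of_nonneg_left hsle ha₂.le) hφr.le
          linarith
        linarith
      show (1 - Real.cos 1)/(4*a₂*φ (1/x^2)) ≤ (1 - Real.cos (l*x)) / φ (l^2)
      exact div_le_div₀ (by linarith [Real.cos_le_one (l*x)]) (by linarith) hφl hφlu
    have h := setIntegral_ge_of_const_le measurableSet_Ioc
      (by rw [Real.volume_Ioc]; exact ENNReal.ofReal_ne_top) hpt hIntIoc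
    rw [measureReal_def, Real.volume_Ioc, ENNReal.toReal_ofReal
        (by rw [show (2:ℝ)/x - 1/x = 1/x from by ring]; positivity),
      show (2:ℝ)/x - 1/x = 1/x from by ring] at h
    rw [smul_eq_mul, mul_comm] at h
    exact h
  have hmono : (∫ l in Ioc (1/x) (2/x), g l) ≤ ∫ l in Ioi (0:ℝ), g l := by
    refine setIntegral_mono_set hIntAll ?_ (HasSubset.Subset.eventuallyLE ?_)
    · exact (ae_restrict_iff' measurableSet_Ioi).2 (ae_of_all _ fun l hl => hgnn l hl)
    · intro l hl; exact lt_trans h1x hl.1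
  have hI_lb : (1 - Real.cos 1)/(4*a₂*φ (1/x^2)) * (1/x) ≤ ∫ l in Ioi (0:ℝ), g l :=
    hLB.trans hmono
  have hI_ub : (∫ l in Ioi (0:ℝ), g l)
      ≤ (a₂/2 + 2/(a₁*(2*δ₁-1))) * (1/(x * φ (1/x^2))) := by
    rw [hsplit]
    have he : a₂ / (2 * φ (1/x^2)) * (1/x) + 2/(a₁ * (2*δ₁-1) * φ (1/x^2)) * (1/x)
        = (a₂/2 + 2/(a₁*(2*δ₁-1))) * (1/(x * φ (1/x^2))) := by
      field_simp
    linarith [hU1, hU2]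
  constructor
  · -- lower estimate
    have step : (1/Real.pi) * ((1 - Real.cos 1)/(4*a₂*φ (1/x^2)) * (1/x))
        ≤ (1/Real.pi) * ∫ l in Ioi (0:ℝ), g l :=
      mul_le_mul_of_nonneg_left hI_lb (by positivity)
    refine le_trans ?_ step
    have hcge : 4*a₂*Real.pi/(1 - Real.cos 1) ≤ c := by rw [hcdef]; linarith
    have hcinv : c⁻¹ ≤ (1 - Real.cos 1)/(4*a₂*Real.pi) := by
      calc c⁻¹ ≤ (4*a₂*Real.pi/(1 - Real.cos 1))⁻¹ := inv_anti₀ hterm1 hcge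
        _ = (1 - Real.cos 1)/(4*a₂*Real.pi) := by rw [inv_div]
    have heq : (1/Real.pi) * ((1 - Real.cos 1)/(4*a₂*φ (1/x^2)) * (1/x))
        = ((1 - Real.cos 1)/(4*a₂*Real.pi)) * (1/(x * φ (1/x^2))) := by
      field_simp
    rw [heq]
    exact mul_le_mul_of_nonneg_right hcinv (by positivity)
  · -- upper estimate
    have step := mul_le_mul_of_nonneg_left hI_ub (by positivity : (0:ℝ) ≤ 1/Real.pi)
    refine step.trans ?_
    rw [show (1/Real.pi) * ((a₂/2 + 2/(a₁*(2*δ₁-1))) * (1/(x * φ (1/x^2))))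
        = ((a₂/2 + 2/(a₁*(2*δ₁-1)))/Real.pi) * (1/(x * φ (1/x^2))) from by ring]
    refine mul_le_mul_of_nonneg_right ?_ (by positivity)
    rw [hcdef]; linarith
end

section
/- Given the two-sided Green function estimate G(x,y) ≍ a(x,y)/(Φ⁻¹(a(x,y)) ∨ |x−y|) with a(x,y) = Φ(δ(x))^{1/2} Φ(δ(y))^{1/2}, the 3G-inequality holds: there is a constant c̃ > 0 such that for all x, y, z ∈ (a,b), G(x,y)G(y,z)/G(x,z) ≤ c̃ · Φ(δ(y)) · (|x−z| ∨ Φ⁻¹(a(x,z))) / ((|x−y| ∨ Φ⁻¹(a(x,y))) · (|y−z| ∨ Φ⁻¹(a(y,z)))). -/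
open Set

theorem threeG_inequality
    (a b : ℝ) (hab : a < b)
    (Φ Φinv δ : ℝ → ℝ)
    (hδ_pos : ∀ x ∈ Ioo a b, 0 < δ x)
    (hΦ_pos : ∀ s > (0:ℝ), 0 < Φ s)
    (hΦinv_pos : ∀ s > (0:ℝ), 0 < Φinv s)
    (afun : ℝ → ℝ → ℝ)
    (hafun : ∀ x y, afun x y = Real.sqrt (Φ (δ x) * Φ (δ y)))
    (G : ℝ → ℝ → ℝ) (c₄ : ℝ) (hc₄ : 0 < c₄)
    (hG : ∀ x ∈ Ioo a b, ∀ y ∈ Ioo a b,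
      c₄⁻¹ * (afun x y / (max (Φinv (afun x y)) |x - y|)) ≤ G x y ∧
      G x y ≤ c₄ * (afun x y / (max (Φinv (afun x y)) |x - y|))) :
    ∃ c > (0:ℝ), ∀ x ∈ Ioo a b, ∀ y ∈ Ioo a b, ∀ z ∈ Ioo a b,
      G x y * G y z / G x z ≤
        c * Φ (δ y) * (max |x - z| (Φinv (afun x z))) /
          ((max |x - y| (Φinv (afun x y))) * (max |y - z| (Φinv (afun y z)))) := by
  refine ⟨c₄ ^ 3, by positivity, ?_⟩
  intro x hx y hy z hz
  have hΦx := hΦ_pos (δ x) (hδ_pos x hx)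
  have hΦy := hΦ_pos (δ y) (hδ_pos y hy)
  have hΦz := hΦ_pos (δ z) (hδ_pos z hz)
  have haxy : 0 < afun x y := by rw [hafun]; positivity
  have hayz : 0 < afun y z := by rw [hafun]; positivity
  have haxz : 0 < afun x z := by rw [hafun]; positivity
  have hMxy : 0 < max (Φinv (afun x y)) |x - y| :=
    lt_max_of_lt_left (hΦinv_pos _ haxy)
  have hMyz : 0 < max (Φinv (afun y z)) |y - z| :=
    lt_max_of_lt_left (hΦinv_pos _ hayz)
  have hMxz : 0 < max (Φinv (afun x z)) |x - z| :=
    lt_max_of_lt_left (hΦinv_pos _ haxz)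
  have hBxy : 0 < afun x y / max (Φinv (afun x y)) |x - y| := by positivity
  have hByz : 0 < afun y z / max (Φinv (afun y z)) |y - z| := by positivity
  have hBxz : 0 < afun x z / max (Φinv (afun x z)) |x - z| := by positivity
  obtain ⟨hGxy₁, hGxy₂⟩ := hG x hx y hy
  obtain ⟨hGyz₁, hGyz₂⟩ := hG y hy z hz
  obtain ⟨hGxz₁, hGxz₂⟩ := hG x hx z hz
  have hGxz_pos : 0 < G x z := lt_of_lt_of_le (by positivity) hGxz₁
  have hGxy_pos : 0 < G x y := lt_of_lt_of_le (by positivity) hGxy₁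
  have hGyz_pos : 0 < G y z := lt_of_lt_of_le (by positivity) hGyz₁
  have haa : afun x y * afun y z = Φ (δ y) * afun x z := by
    rw [hafun, hafun, hafun, ← Real.sqrt_mul (by positivity)]
    have h : Φ (δ x) * Φ (δ y) * (Φ (δ y) * Φ (δ z)) =
        Φ (δ y) ^ 2 * (Φ (δ x) * Φ (δ z)) := by ring
    rw [h, Real.sqrt_mul (by positivity), Real.sqrt_sq hΦy.le]
  have key : G x y * G y z / G x z ≤
      (c₄ * (afun x y / max (Φinv (afun x y)) |x - y|)) *
        (c₄ * (afun y z / max (Φinv (afun y z)) |y - z|)) /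
        (c₄⁻¹ * (afun x z / max (Φinv (afun x z)) |x - z|)) := by
    apply div_le_div₀ (by positivity)
      (mul_le_mul hGxy₂ hGyz₂ hGyz_pos.le (by positivity))
      (by positivity) hGxz₁
  refine key.trans (le_of_eq ?_)
  rw [max_comm |x - z|, max_comm |x - y|, max_comm |y - z|]
  field_simp
  linear_combination haa
end
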